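/- Consider a two-layer bias-free bilinear network whose scalar output in direction u ∈ ℝ^n is f(x) = u^T((W₂y) ⊙ (V₂y)) with y = (W₁x) ⊙ (V₁x), for W₁, V₁ ∈ ℝ^{m×d} and W₂, V₂ ∈ ℝ^{n×m}. Then there exist real numbers λ_1, …, λ_m, an orthonormal basis v_1, …, v_m of ℝ^m, and for each i real numbers μ_{i,1}, …, μ_{i,d} and an orthonormal basis w_{i,1}, …, w_{i,d} of ℝ^d, such that for every x ∈ ℝ^d: f(x) = Σ_{i=1}^{m} λ_i ( Σ_{j=1}^{d} μ_{i,j} (w_{i,j}^T x)^2 )^2. -/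

import Mathlib

open Matrix

lemma spectral {k : ℕ} (A : Matrix (Fin k) (Fin k) ℝ) (hA : A.IsHermitian) :
    ∃ (lam : Fin k → ℝ) (v : Fin k → Fin k → ℝ),
      (∀ i j, v i ⬝ᵥ v j = if i = j then 1 else 0) ∧
      (∀ x : Fin k → ℝ, x ⬝ᵥ A.mulVec x = ∑ i, lam i * (v i ⬝ᵥ x) ^ 2) := by
  set B := hA.eigenvectorBasis with hB
  refine ⟨hA.eigenvalues, fun i => B i, ?_, ?_⟩
  · intro i j
    have := B.orthonormal
    rw [orthonormal_iff_ite] at this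
    have h := this i j
    simpa [PiLp.inner_apply, dotProduct, mul_comm] using h
  · intro x
    have hmv : ∀ i, A.mulVec (B i) = hA.eigenvalues i • (B i : Fin k → ℝ) := by
      intro i
      exact hA.mulVec_eigenvectorBasis i
    have h2 : ∀ i, (inner ℝ (B i) (WithLp.toLp 2 x) : ℝ) = (B i : Fin k → ℝ) ⬝ᵥ x := by
      intro i
      simp [PiLp.inner_apply, dotProduct, mul_comm]
    have hrep : ∑ i, ((B i : Fin k → ℝ) ⬝ᵥ x) • (B i : Fin k → ℝ) = x := by
      have h := B.sum_repr' (WithLp.toLp 2 x)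
      calc ∑ i, ((B i : Fin k → ℝ) ⬝ᵥ x) • (B i : Fin k → ℝ)
          = ∑ i, (inner ℝ (B i) (WithLp.toLp 2 x) : ℝ) • (B i : Fin k → ℝ) := by
            exact Finset.sum_congr rfl fun i _ => by rw [h2]
        _ = x := by
            have h' := congrArg WithLp.ofLp h
            simpa using h'
    calc x ⬝ᵥ A.mulVec x
        = x ⬝ᵥ A.mulVec (∑ i, ((B i : Fin k → ℝ) ⬝ᵥ x) • (B i : Fin k → ℝ)) := by rw [hrep]
      _ = x ⬝ᵥ ∑ i, ((B i : Fin k → ℝ) ⬝ᵥ x) • (hA.eigenvalues i • (B i : Fin k → ℝ)) := by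
          rw [show A.mulVec (∑ i, ((B i : Fin k → ℝ) ⬝ᵥ x) • (B i : Fin k → ℝ))
              = ∑ i, ((B i : Fin k → ℝ) ⬝ᵥ x) • (hA.eigenvalues i • (B i : Fin k → ℝ)) from by
            rw [show A.mulVec (∑ i, ((B i : Fin k → ℝ) ⬝ᵥ x) • (B i : Fin k → ℝ))
                = (Matrix.mulVecLin A) (∑ i, ((B i : Fin k → ℝ) ⬝ᵥ x) • (B i : Fin k → ℝ)) from rfl,
              map_sum]
            exact Finset.sum_congr rfl fun i _ => by
              rw [_root_.map_smul, Matrix.mulVecLin_apply, hmv i]]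
      _ = ∑ i, hA.eigenvalues i * (((B i : Fin k → ℝ) ⬝ᵥ x) ^ 2) := by
          simp only [dotProduct, Finset.sum_apply, PiLp.smul_apply, smul_eq_mul,
            Finset.mul_sum]
          rw [Finset.sum_comm]
          refine Finset.sum_congr rfl fun i _ => ?_
          set c := ∑ b, (B i : Fin k → ℝ) b * x b with hc
          calc ∑ a, x a * (c * (hA.eigenvalues i * (B i : Fin k → ℝ) a))
              = (c * hA.eigenvalues i) * ∑ a, (B i : Fin k → ℝ) a * x a := by
                rw [Finset.mul_sum]
                exact Finset.sum_congr rfl fun a _ => by ring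
            _ = hA.eigenvalues i * c ^ 2 := by
                have : ∑ a, (B i : Fin k → ℝ) a * x a = c := by rw [hc]
                rw [this]; ring
open Matrix

lemma quad {l k : ℕ} (W V : Matrix (Fin l) (Fin k) ℝ) (c : Fin l → ℝ) (y : Fin k → ℝ) :
    y ⬝ᵥ (Wᵀ * diagonal c * V).mulVec y
      = ∑ a, c a * (W.mulVec y a * V.mulVec y a) := by
  rw [← Matrix.mulVec_mulVec, ← Matrix.mulVec_mulVec, Matrix.dotProduct_mulVec,
    Matrix.vecMul_transpose]
  simp only [dotProduct, Matrix.mulVec_diagonal]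
  exact Finset.sum_congr rfl fun a _ => by ring

lemma symquad {k : ℕ} (M : Matrix (Fin k) (Fin k) ℝ) :
    ((1/2 : ℝ) • (M + Mᵀ)).IsHermitian ∧
    ∀ y : Fin k → ℝ, y ⬝ᵥ ((1/2 : ℝ) • (M + Mᵀ)).mulVec y = y ⬝ᵥ M.mulVec y := by
  constructor
  · unfold Matrix.IsHermitian
    rw [conjTranspose_smul, conjTranspose_add]
    simp [Matrix.conjTranspose, Matrix.transpose_map, add_comm]
    rw [show M.map ⇑(starRingEnd ℝ) = M from by ext i j; simp]
  · intro y
    have ht : y ⬝ᵥ Mᵀ.mulVec y = y ⬝ᵥ M.mulVec y := by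
      rw [Matrix.dotProduct_mulVec, Matrix.vecMul_transpose, dotProduct_comm]
    rw [Matrix.smul_mulVec, Matrix.add_mulVec, dotProduct_smul,
      dotProduct_add, ht]
    ring_nf

/-- Full-model eigendecomposition of a two-layer bias-free bilinear network:
if `f(x) = uᵀ((W₂y) ⊙ (V₂y))` with `y = (W₁x) ⊙ (V₁x)`, then there exist
eigenvalues `λᵢ` with an orthonormal basis `vᵢ` of `ℝ^m`, and for each `i`
eigenvalues `μᵢⱼ` with an orthonormal basis `wᵢⱼ` of `ℝ^d`, such that
`f(x) = ∑ᵢ λᵢ (∑ⱼ μᵢⱼ (wᵢⱼᵀ x)²)²` for every `x`. -/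
theorem two_layer_bilinear_eigendecomposition
    (d m n : ℕ) (W₁ V₁ : Matrix (Fin m) (Fin d) ℝ) (W₂ V₂ : Matrix (Fin n) (Fin m) ℝ)
    (u : Fin n → ℝ) (f : (Fin d → ℝ) → ℝ)
    (hf : ∀ x : Fin d → ℝ,
      f x = u ⬝ᵥ (fun a =>
        (W₂.mulVec (fun b => (W₁.mulVec x b) * (V₁.mulVec x b)) a) *
        (V₂.mulVec (fun b => (W₁.mulVec x b) * (V₁.mulVec x b)) a))) :
    ∃ (lam : Fin m → ℝ) (v : Fin m → Fin m → ℝ)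
      (mu : Fin m → Fin d → ℝ) (w : Fin m → Fin d → Fin d → ℝ),
      (∀ i j, v i ⬝ᵥ v j = if i = j then 1 else 0) ∧
      (∀ i, ∀ j k, w i j ⬝ᵥ w i k = if j = k then 1 else 0) ∧
      ∀ x : Fin d → ℝ,
        f x = ∑ i : Fin m, lam i * (∑ j : Fin d, mu i j * (w i j ⬝ᵥ x) ^ 2) ^ 2 := by
  obtain ⟨hH2, hQ2⟩ := symquad (W₂ᵀ * diagonal u * V₂)
  obtain ⟨lam, v, hv, hq⟩ := spectral _ hH2
  have hexists : ∀ i : Fin m, ∃ (mu : Fin d → ℝ) (w : Fin d → Fin d → ℝ),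
      (∀ j k, w j ⬝ᵥ w k = if j = k then 1 else 0) ∧
      ∀ x : Fin d → ℝ,
        x ⬝ᵥ (W₁ᵀ * diagonal (v i) * V₁).mulVec x = ∑ j, mu j * (w j ⬝ᵥ x) ^ 2 := by
    intro i
    obtain ⟨hH1, hQ1⟩ := symquad (W₁ᵀ * diagonal (v i) * V₁)
    obtain ⟨mu, w, hw, hq1⟩ := spectral _ hH1
    exact ⟨mu, w, hw, fun x => by rw [← hQ1 x, hq1 x]⟩
  choose mu w hw hmu using hexists
  refine ⟨lam, v, mu, w, hv, hw, ?_⟩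
  intro x
  set y : Fin m → ℝ := fun b => (W₁.mulVec x b) * (V₁.mulVec x b) with hy
  have step1 : f x = y ⬝ᵥ (W₂ᵀ * diagonal u * V₂).mulVec y := by
    rw [hf x, quad W₂ V₂ u y]
    rfl
  have step2 : f x = ∑ i, lam i * (v i ⬝ᵥ y) ^ 2 := by
    rw [step1, ← hQ2 y, hq y]
  have step3 : ∀ i : Fin m, v i ⬝ᵥ y = ∑ j, mu i j * (w i j ⬝ᵥ x) ^ 2 := by
    intro i
    have : v i ⬝ᵥ y = x ⬝ᵥ (W₁ᵀ * diagonal (v i) * V₁).mulVec x := by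
      rw [quad W₁ V₁ (v i) x]
      rfl
    rw [this, hmu i x]
  rw [step2]
  exact Finset.sum_congr rfl fun i _ => by rw [step3 i]
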